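/- Let n ≥ 1, let Γ = {0,1,#} (with 0, 1, # distinct symbols), and let Δ = Γ × Γ. For equal-length words x, y over Γ, their convolution conv(x,y) is the word over Δ of the same length whose i-th letter is (x[i], y[i]). Let E'_n be the language over Δ consisting of all words conv(u·#·v, u'·#·v') where u, v, u', v' ∈ {0,1}ⁿ and for every index i < n, u[i] XOR v[i] = u'[i] XOR v'[i]. Then every nondeterministic finite automaton (with finite state set Q, a set of initial states, transition function Δ' : Q → Δ → Set Q, and a set of accepting states) whose accepted language equals E'_n has at least 2ⁿ states. -/

import Mathlib

/-- The encoding `u·#·v` of a pair of bit strings as a word over `Γ = {0,1,#}`, where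
the bits are modelled by `some false / some true : Option Bool` and `#` by `none`. -/
def encB (u v : List Bool) : List (Option Bool) :=
  u.map some ++ [none] ++ v.map some

/-- The language `E'_n` over `Δ = Γ × Γ`: convolutions `conv(u·#·v, u'·#·v')` of pairs
of words `u#v` and `u'#v'` with `u, v, u', v' ∈ {0,1}ⁿ` such that
`u[i] XOR v[i] = u'[i] XOR v'[i]` for every `i < n`.  The convolution of two
equal-length words is their `List.zip`. -/
def EPrime (n : ℕ) : Set (List (Option Bool × Option Bool)) :=
  {w | ∃ u v u' v' : List Bool,
    u.length = n ∧ v.length = n ∧ u'.length = n ∧ v'.length = n ∧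
    (∀ i < n, xor (u.getD i false) (v.getD i false)
            = xor (u'.getD i false) (v'.getD i false)) ∧
    w = (encB u v).zip (encB u' v')}

/-- Membership in `evalFrom` of a set can be traced to a single starting state. -/
lemma mem_evalFrom_iff {α σ : Type*} (M : NFA α σ) (x : List α) :
    ∀ (S : Set σ) (a : σ), a ∈ M.evalFrom S x ↔ ∃ s ∈ S, a ∈ M.evalFrom {s} x := by
  induction x with
  | nil => intro S a; simp [NFA.evalFrom]
  | cons c x ih =>
    intro S a
    show a ∈ M.evalFrom (M.stepSet S c) x ↔ _
    rw [ih]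
    constructor
    · rintro ⟨m, hm, ha⟩
      rw [NFA.mem_stepSet] at hm
      obtain ⟨s, hs, hm⟩ := hm
      refine ⟨s, hs, ?_⟩
      show a ∈ M.evalFrom (M.stepSet {s} c) x
      rw [ih]
      exact ⟨m, by simpa [NFA.mem_stepSet] using hm, ha⟩
    · rintro ⟨s, hs, ha⟩
      have h' : a ∈ M.evalFrom (M.stepSet {s} c) x := ha
      rw [ih] at h'
      obtain ⟨m, hm, ha'⟩ := h'
      rw [NFA.mem_stepSet] at hm
      obtain ⟨t, ht, hm⟩ := hm
      exact ⟨m, NFA.mem_stepSet.2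
        ⟨s, hs, (Set.mem_singleton_iff.1 ht) ▸ hm⟩, ha'⟩

lemma evalFrom_append {α σ : Type*} (M : NFA α σ) (S : Set σ) (x y : List α) :
    M.evalFrom S (x ++ y) = M.evalFrom (M.evalFrom S x) y :=
  List.foldl_append ..

/-- the `zip` of two encodings splits at the separator -/
lemma zip_encB (u v u' v' : List Bool) (h : u.length = u'.length) :
    (encB u v).zip (encB u' v')
      = (u.map some).zip (u'.map some)
        ++ [((none : Option Bool), (none : Option Bool))]
        ++ (v.map some).zip (v'.map some) := by
  unfold encB
  rw [List.zip_append (by simp [h]), List.zip_append (by simp [h])]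
  rfl

/-- every NFA accepting `E'_n` has at least `2ⁿ` states. -/
theorem EPrime_nfa_lower_bound
    (n : ℕ) (hn : 1 ≤ n) (Q : Type) [Fintype Q]
    (M : NFA (Option Bool × Option Bool) Q)
    (hM : M.accepts = EPrime n) :
    2 ^ n ≤ Fintype.card Q := by
  classical
  set z : List Bool := List.replicate n false with hz
  -- prefix and suffix words
  let pre : (Fin n → Bool) → List (Option Bool × Option Bool) := fun s =>
    ((List.ofFn s).map some).zip (z.map some)
      ++ [((none : Option Bool), (none : Option Bool))]
  let suf : (Fin n → Bool) → List (Option Bool × Option Bool) := fun t =>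
    (z.map some).zip ((List.ofFn t).map some)
  -- crossing prefix and suffix gives the encoded word
  have hcross : ∀ s t : Fin n → Bool,
      pre s ++ suf t = (encB (List.ofFn s) z).zip (encB z (List.ofFn t)) := by
    intro s t
    rw [zip_encB _ _ _ _ (by simp [hz])]
  -- getD facts
  have hget : ∀ (s : Fin n → Bool) (i : ℕ) (hi : i < n),
      (List.ofFn s).getD i false = s ⟨i, hi⟩ := by
    intro s i hi
    rw [List.getD_eq_getElem _ _ (by simpa using hi)]
    simp
  have hzget : ∀ (i : ℕ), i < n → z.getD i false = false := by
    intro i hi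
    rw [List.getD_eq_getElem _ _ (by simpa [hz] using hi)]
    simp [hz]
  -- the diagonal word is accepted
  have hmem : ∀ s : Fin n → Bool, pre s ++ suf s ∈ EPrime n := by
    intro s
    refine ⟨List.ofFn s, z, z, List.ofFn s, by simp, by simp [hz], by simp [hz], by simp, ?_,
      (hcross s s)⟩
    intro i hi
    rw [hget s i hi, hzget i hi]
    simp
  -- crossing distinct words forces equality
  have hcross_mem : ∀ s t : Fin n → Bool, pre s ++ suf t ∈ EPrime n → s = t := by
    intro s t hmem'
    obtain ⟨u, v, u', v', hu, hv, hu', hv', hxor, heq⟩ := hmem'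
    rw [zip_encB u v u' v' (by omega)] at heq
    simp only [pre, suf] at heq
    -- split the append
    obtain ⟨hfront, h3⟩ := List.append_inj heq (by simp [hz, hu, hu'])
    obtain ⟨h1, -⟩ := List.append_inj hfront (by simp [hz, hu, hu'])
    -- extract components via map fst / map snd
    have hus : u = List.ofFn s := by
      have := congrArg (List.map Prod.fst) h1
      rw [List.map_fst_zip (by simp [hz, hu, hu']), List.map_fst_zip (by simp [hu, hu'])] at this
      exact (List.map_injective_iff.2 (Option.some_injective _) this.symm)
    have huz : u' = z := by
      have := congrArg (List.map Prod.snd) h1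
      rw [List.map_snd_zip (by simp [hz, hu, hu']), List.map_snd_zip (by simp [hu, hu'])] at this
      exact (List.map_injective_iff.2 (Option.some_injective _) this.symm)
    have hvz : v = z := by
      have := congrArg (List.map Prod.fst) h3
      rw [List.map_fst_zip (by simp [hz, hv, hv']), List.map_fst_zip (by simp [hv, hv'])] at this
      exact (List.map_injective_iff.2 (Option.some_injective _) this.symm)
    have hvt : v' = List.ofFn t := by
      have := congrArg (List.map Prod.snd) h3
      rw [List.map_snd_zip (by simp [hz, hv, hv']), List.map_snd_zip (by simp [hv, hv'])] at this
      exact (List.map_injective_iff.2 (Option.some_injective _) this.symm)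
    subst hus huz hvz hvt
    funext i
    have := hxor i.1 i.2
    rw [hget s i.1 i.2, hget t i.1 i.2, hzget i.1 i.2] at this
    simpa using this
  -- choose a fooling state for each s
  have hstate : ∀ s : Fin n → Bool, ∃ m : Q,
      m ∈ M.evalFrom M.start (pre s) ∧ ∃ a ∈ M.accept, a ∈ M.evalFrom {m} (suf s) := by
    intro s
    have : pre s ++ suf s ∈ M.accepts := by rw [hM]; exact hmem s
    obtain ⟨a, ha, haev⟩ := this
    rw [NFA.eval, evalFrom_append, mem_evalFrom_iff] at haev
    obtain ⟨m, hm, ham⟩ := haev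
    exact ⟨m, hm, a, ha, ham⟩
  choose f hf1 hf2 using hstate
  have hinj : Function.Injective f := by
    intro s t hst
    obtain ⟨a, ha, ham⟩ := hf2 t
    have : pre s ++ suf t ∈ M.accepts := by
      refine ⟨a, ha, ?_⟩
      rw [NFA.eval, evalFrom_append, mem_evalFrom_iff]
      exact ⟨f s, hf1 s, by rw [hst]; exact ham⟩
    exact hcross_mem s t (hM ▸ this)
  calc 2 ^ n = Fintype.card (Fin n → Bool) := by simp
    _ ≤ Fintype.card Q := Fintype.card_le_of_injective f hinj
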